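/- Let a, b ∈ ℂ with a+b ≠ 0, and let Γ_J(a), Γ_J(b) be lower Jordan blocks of sizes N_1, N_2 respectively. Then the N_1×N_2 matrix G with entries G_{ij} = C(i+j-2, i-1)·(-1)^{i+j}/(a+b)^{i+j-1} satisfies G Γ_J(b)^T + Γ_J(a) G = e_1 e_1^T, where e_1 denotes the first standard basis vector (of appropriate length) and C(n,k) is the binomial coefficient. -/

import Mathlib

open Matrix

/-- The N×N lower Jordan block with `a` on the diagonal and 1 on the subdiagonal. -/
def jordanBlock (N : ℕ) (a : ℂ) : Matrix (Fin N) (Fin N) ℂ :=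
  Matrix.of fun i j => if (i : ℕ) = j then a else if (i : ℕ) = (j : ℕ) + 1 then 1 else 0

lemma sum1 {N : ℕ} (f : Fin N → ℂ) (j : Fin N) :
    (∑ k : Fin N, if (j : ℕ) = (k : ℕ) then f k else 0) = f j := by
  simp_rw [Fin.val_eq_val]
  simp [Finset.sum_ite_eq]

lemma sum2 {N : ℕ} (f : Fin N → ℂ) (j : Fin N) :
    (∑ k : Fin N, if (j : ℕ) = (k : ℕ) + 1 then f k else 0)
      = if hj : (j : ℕ) = 0 then 0 else f ⟨(j : ℕ) - 1, by omega⟩ := by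
  split
  · next hj => apply Finset.sum_eq_zero; intro k _; simp [hj]
  · next hj =>
    rw [Finset.sum_eq_single ⟨(j : ℕ) - 1, by omega⟩]
    · simp; omega
    · intro k _ hk
      rw [if_neg]
      intro h
      apply hk
      apply Fin.ext
      simp
      omega
    · simp

lemma keylem (a b : ℂ) (hab : a + b ≠ 0) (n m : ℕ) :
    (a + b) * ((Nat.choose (n + m) n : ℂ) * (-1) ^ (n + m) / (a + b) ^ (n + m + 1))
      + (if n = 0 then 0 else (Nat.choose (n - 1 + m) (n - 1) : ℂ) * (-1) ^ (n - 1 + m) / (a + b) ^ (n - 1 + m + 1))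
      + (if m = 0 then 0 else (Nat.choose (n + (m - 1)) n : ℂ) * (-1) ^ (n + (m - 1)) / (a + b) ^ (n + (m - 1) + 1))
      = if n = 0 ∧ m = 0 then 1 else 0 := by
  have hp : ∀ K : ℕ, (a + b) ^ K ≠ 0 := fun K => pow_ne_zero K hab
  match n, m with
  | 0, 0 => simp; field_simp
  | 0, m + 1 =>
    simp only [if_neg (Nat.succ_ne_zero m), if_pos rfl, Nat.succ_sub_one, Nat.add_one_ne_zero, and_false, false_and, true_and, and_true, ↓reduceIte]
    simp only [Nat.zero_add, Nat.choose_zero_right, Nat.cast_one]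
    field_simp
    ring
  | n + 1, 0 =>
    simp only [if_neg (Nat.succ_ne_zero n), if_pos rfl, Nat.succ_sub_one, Nat.add_one_ne_zero, and_false, false_and, true_and, and_true, ↓reduceIte]
    simp only [Nat.add_zero, Nat.choose_self, Nat.cast_one]
    field_simp
    ring
  | n + 1, m + 1 =>
    simp only [if_neg (Nat.succ_ne_zero _), Nat.succ_sub_one]
    rw [if_neg (by simp)]
    have hc0 : (n + 1 + (m + 1)).choose (n + 1)
        = (n + (m + 1)).choose n + (n + 1 + m).choose (n + 1) := by
      have h := Nat.choose_succ_succ' (n + m + 1) n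
      rw [show n + 1 + (m + 1) = n + m + 1 + 1 by omega,
        show n + (m + 1) = n + m + 1 by omega, show n + 1 + m = n + m + 1 by omega]
      exact h
    have hc : ((n + 1 + (m + 1)).choose (n + 1) : ℂ)
        = ((n + (m + 1)).choose n : ℂ) + ((n + 1 + m).choose (n + 1) : ℂ) := by
      rw [hc0]; push_cast; ring
    rw [hc]
    field_simp
    ring

theorem cauchy_elementary_jordan_jordan (N₁ N₂ : ℕ) (a b : ℂ) (hab : a + b ≠ 0) :
    let G : Matrix (Fin N₁) (Fin N₂) ℂ :=
      Matrix.of fun i j =>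
        (Nat.choose ((i : ℕ) + (j : ℕ)) (i : ℕ) : ℂ) * (-1) ^ ((i : ℕ) + (j : ℕ))
          / (a + b) ^ ((i : ℕ) + (j : ℕ) + 1)
    G * (jordanBlock N₂ b)ᵀ + jordanBlock N₁ a * G
      = Matrix.of fun (i : Fin N₁) (j : Fin N₂) =>
          if (i : ℕ) = 0 ∧ (j : ℕ) = 0 then (1 : ℂ) else 0 := by
  intro G
  ext i j
  have hG : ∀ (i : Fin N₁) (j : Fin N₂), G i j
      = (Nat.choose ((i : ℕ) + (j : ℕ)) (i : ℕ) : ℂ) * (-1) ^ ((i : ℕ) + (j : ℕ))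
          / (a + b) ^ ((i : ℕ) + (j : ℕ) + 1) := fun _ _ => rfl
  have h1 : (G * (jordanBlock N₂ b)ᵀ) i j
      = G i j * b + (if hj : (j : ℕ) = 0 then 0 else G i ⟨(j : ℕ) - 1, by omega⟩) := by
    rw [Matrix.mul_apply]
    have : ∀ k : Fin N₂, G i k * (jordanBlock N₂ b)ᵀ k j
        = (if (j : ℕ) = (k : ℕ) then G i k * b else 0)
          + (if (j : ℕ) = (k : ℕ) + 1 then G i k else 0) := by
      intro k
      simp only [Matrix.transpose_apply, jordanBlock, Matrix.of_apply]
      rcases eq_or_ne (j : ℕ) (k : ℕ) with h | h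
      · rw [if_pos h, if_pos h, if_neg (by omega)]; ring
      · rw [if_neg h, if_neg h]
        split <;> ring
    simp_rw [this, Finset.sum_add_distrib, sum1, sum2]
  have h2 : (jordanBlock N₁ a * G) i j
      = a * G i j + (if hi : (i : ℕ) = 0 then 0 else G ⟨(i : ℕ) - 1, by omega⟩ j) := by
    rw [Matrix.mul_apply]
    have : ∀ k : Fin N₁, jordanBlock N₁ a i k * G k j
        = (if (i : ℕ) = (k : ℕ) then a * G k j else 0)
          + (if (i : ℕ) = (k : ℕ) + 1 then G k j else 0) := by
      intro k
      simp only [jordanBlock, Matrix.of_apply]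
      rcases eq_or_ne (i : ℕ) (k : ℕ) with h | h
      · rw [if_pos h, if_pos h, if_neg (by omega)]; ring
      · rw [if_neg h, if_neg h]
        split <;> ring
    simp_rw [this, Finset.sum_add_distrib]
    rw [sum1 (fun k => a * G k j), sum2 (fun k => G k j)]
  rw [Matrix.add_apply, h1, h2, Matrix.of_apply]
  have := keylem a b hab (i : ℕ) (j : ℕ)
  simp only [hG] at *
  rw [← this]
  split <;> split <;> ring
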